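/- For the reflected van der Corput sequence (1−φ(n))_{n≥0}, for all 0 ≤ j < ⌈log₂ N⌉ and all m ∈ {0,...,2^j−1}, the Haar coefficient of the local discrepancy satisfies |μ^{N,1−φ}_{j,m}| ≤ 2^{−j}/N, and for j ≥ ⌈log₂ N⌉ one has |μ^{N,1−φ}_{j,m}| = 2^{−2j−2}. -/

import Mathlib

open MeasureTheory Finset

/-- Base-2 radical inverse: for `n = ∑ nᵢ 2ⁱ`, `radInv n = ∑ nᵢ 2^{-i-1}`. -/
noncomputable def radInv (n : ℕ) : ℝ :=
  ∑ i ∈ Finset.range n, if n.testBit i then (1:ℝ)/2^(i+1) else 0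

/-- L∞-normalized Haar function supported on `I_{j,m} = [m/2^j, (m+1)/2^j)`. -/
noncomputable def haarFn (j m : ℕ) (t : ℝ) : ℝ :=
  if (m:ℝ)/2^j ≤ t ∧ t < (m:ℝ)/2^j + 1/2^(j+1) then 1
  else if (m:ℝ)/2^j + 1/2^(j+1) ≤ t ∧ t < ((m:ℝ)+1)/2^j then -1
  else 0

/-- Local discrepancy of the first `N` terms of the sequence `x`. -/
noncomputable def disc (x : ℕ → ℝ) (N : ℕ) (t : ℝ) : ℝ :=
  (∑ n ∈ Finset.range N, Set.indicator (Set.Ico (0:ℝ) t) (fun _ => (1:ℝ)) (x n)) / N - t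

/-- Symmetrized van der Corput sequence: `z_{2m} = φ(m)`, `z_{2m+1} = 1 - φ(m)`. -/
noncomputable def vdcSym (n : ℕ) : ℝ :=
  if n % 2 = 0 then radInv (n / 2) else 1 - radInv (n / 2)

/-- Haar coefficient `μ_{j,m}` of the local discrepancy of the first `N` terms of `x`. -/
noncomputable def haarCoeff (x : ℕ → ℝ) (N j m : ℕ) : ℝ :=
  ∫ t in (0:ℝ)..1, disc x N t * haarFn j m t

lemma radInv_eq_sum (n B : ℕ) (h : n ≤ B) :
    radInv n = ∑ i ∈ Finset.range B, if n.testBit i then (1:ℝ)/2^(i+1) else 0 := by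
  unfold radInv
  apply Finset.sum_subset (Finset.range_subset_range.2 h)
  intro i hi hni
  simp only [Finset.mem_range, not_lt] at hni
  rw [Nat.testBit_lt_two_pow (lt_of_le_of_lt hni Nat.lt_two_pow_self)]
  simp

lemma radInv_zero : radInv 0 = 0 := by simp [radInv]

lemma radInv_rec (n : ℕ) : radInv n = (n % 2 : ℕ)/2 + radInv (n/2) / 2 := by
  rcases Nat.eq_zero_or_pos n with h | h
  · simp [h, radInv_zero]
  have h1 : radInv n = (if n.testBit 0 then (1:ℝ)/2 else 0)
      + ∑ i ∈ range n, (if (n/2).testBit i then (1:ℝ)/2^(i+1+1) else 0) := by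
    rw [radInv_eq_sum n (n+1) (by omega), Finset.sum_range_succ', add_comm]
    congr 1
    · norm_num
    · apply Finset.sum_congr rfl; intro i _
      rw [Nat.testBit_succ]
  have h2 : radInv (n/2) / 2 = ∑ i ∈ range n, (if (n/2).testBit i then (1:ℝ)/2^(i+1+1) else 0) := by
    rw [radInv_eq_sum (n/2) n (by omega), Finset.sum_div]
    apply Finset.sum_congr rfl; intro i _
    split
    · rw [pow_succ]; ring
    · simp
  rw [h1, ← h2, Nat.testBit_zero]
  rcases Nat.mod_two_eq_zero_or_one n with h2 | h2 <;> simp [h2]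

lemma radInv_nonneg (n : ℕ) : 0 ≤ radInv n := by
  apply Finset.sum_nonneg; intro i _; split <;> positivity

lemma radInv_lt_one (n : ℕ) : radInv n < 1 := by
  have h1 : radInv n ≤ ∑ i ∈ Finset.range n, (1:ℝ)/2^(i+1) := by
    apply Finset.sum_le_sum; intro i _; split
    · exact le_rfl
    · positivity
  have h2 : ∀ k : ℕ, ∑ i ∈ Finset.range k, (1:ℝ)/2^(i+1) = 1 - (1/2)^k := by
    intro k; induction k with
    | zero => simp
    | succ k ih => rw [Finset.sum_range_succ, ih]; simp only [one_div, inv_pow, pow_succ]; ring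
  have h3 : (0:ℝ) < (1/2)^n := by positivity
  rw [h2 n] at h1; linarith

def nrev (j s : ℕ) : ℕ := ∑ i ∈ Finset.range j, if s.testBit i then 2^(j-1-i) else 0

lemma nrev_succ_left (j s : ℕ) : nrev (j+1) s = (s % 2) * 2^j + nrev j (s/2) := by
  unfold nrev
  rw [Finset.sum_range_succ', add_comm]
  congr 1
  · rw [Nat.testBit_zero]
    rcases Nat.mod_two_eq_zero_or_one s with h | h <;> simp [h]
  · apply Finset.sum_congr rfl; intro i hi
    rw [Nat.testBit_succ]
    congr 2
    omega

lemma nrev_succ_right (j s : ℕ) :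
    nrev (j+1) s = 2 * nrev j (s % 2^j) + (if s.testBit j then 1 else 0) := by
  unfold nrev
  rw [Finset.sum_range_succ, Finset.mul_sum]
  congr 1
  · apply Finset.sum_congr rfl; intro i hi
    simp only [Finset.mem_range] at hi
    have hb : (s % 2^j).testBit i = s.testBit i := by
      rw [Nat.testBit_mod_two_pow]
      simp [hi]
    rw [hb]
    split
    · have : j + 1 - 1 - i = (j - 1 - i) + 1 := by omega
      rw [this, pow_succ]
      ring
    · simp
  · simp

lemma nrev_lt (j s : ℕ) : nrev j s < 2^j := by
  induction j generalizing s with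
  | zero => simp [nrev]
  | succ j ih =>
    rw [nrev_succ_left]
    have := ih (s/2)
    have h2 : s % 2 ≤ 1 := by omega
    calc (s % 2) * 2^j + nrev j (s/2) ≤ 1 * 2^j + nrev j (s/2) := by
          exact Nat.add_le_add_right (Nat.mul_le_mul_right _ h2) _
      _ < 2^(j+1) := by rw [pow_succ]; omega

lemma nrev_nrev (j s : ℕ) (h : s < 2^j) : nrev j (nrev j s) = s := by
  induction j generalizing s with
  | zero => interval_cases s; simp [nrev]
  | succ j ih =>
    have hlt : nrev j (s/2) < 2^j := nrev_lt j (s/2)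
    rw [nrev_succ_right, nrev_succ_left]
    have hx : s % 2 * 2 ^ j + nrev j (s / 2) = 2 ^ j * (s % 2) + nrev j (s / 2) := by ring
    have hmod : (s % 2 * 2 ^ j + nrev j (s / 2)) % 2 ^ j = nrev j (s / 2) := by
      rw [hx, Nat.mul_add_mod, Nat.mod_eq_of_lt hlt]
    have hbit : (s % 2 * 2 ^ j + nrev j (s / 2)).testBit j = decide (s % 2 = 1) := by
      rw [hx, Nat.testBit_two_pow_mul_add _ hlt]
      simp [Nat.testBit_zero]
    rw [hmod, hbit, ih (s/2) (by omega)]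
    rcases Nat.mod_two_eq_zero_or_one s with h2 | h2 <;> simp [h2] <;> omega

lemma radInv_eq_nrev (j s : ℕ) (h : s < 2^j) : radInv s = (nrev j s : ℝ) / 2^j := by
  induction j generalizing s with
  | zero => interval_cases s; simp [radInv_zero, nrev]
  | succ j ih =>
    rw [radInv_rec, ih (s/2) (by omega), nrev_succ_left]
    push_cast
    rw [pow_succ]
    field_simp

lemma radInv_split (j n : ℕ) : radInv n = radInv (n % 2^j) + radInv (n / 2^j) / 2^j := by
  induction j generalizing n with
  | zero => simp [Nat.mod_one, radInv_zero]
  | succ j ih =>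
    have hp : (2:ℕ)^(j+1) = 2*2^j := by ring
    have e1 : n / 2^(j+1) = n / 2 / 2^j := by rw [Nat.div_div_eq_div_mul, ← pow_succ']
    have e2 : n / 2 % 2^j = (n % 2^(j+1)) / 2 := by
      have h0 : n = 2 * (2^j * (n / 2^(j+1))) + n % 2^(j+1) := by
        rw [← mul_assoc, ← hp]
        exact (Nat.div_add_mod n _).symm
      have hlt : n % 2^(j+1) / 2 < 2^j := by
        have := Nat.mod_lt n (show 0 < 2^(j+1) by positivity)
        rw [hp] at this
        omega
      conv_lhs => rw [h0]
      rw [Nat.mul_add_div (by norm_num), Nat.mul_add_mod, Nat.mod_eq_of_lt hlt]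
    have e3 : (n % 2) = (n % 2^(j+1)) % 2 :=
      (Nat.mod_mod_of_dvd n ⟨2^j, hp⟩).symm
    rw [radInv_rec n, ih (n/2), e1, e2, radInv_rec (n % 2^(j+1)), ← e3, pow_succ]
    push_cast
    ring

noncomputable def psi (k : ℕ) : ℝ := min (radInv k) (1 - radInv k)

lemma psi_even (t : ℕ) : psi (2*t) = radInv t / 2 := by
  have h1 : radInv (2*t) = radInv t / 2 := by
    rw [radInv_rec (2*t)]
    simp [Nat.mul_div_cancel_left, Nat.mul_mod_right]
  have h2 := radInv_lt_one t
  have h3 := radInv_nonneg t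
  rw [psi, h1, min_eq_left (by linarith)]

lemma psi_odd (t : ℕ) : psi (2*t+1) = 1/2 - radInv t / 2 := by
  have h1 : radInv (2*t+1) = 1/2 + radInv t / 2 := by
    rw [radInv_rec (2*t+1)]
    have : (2*t+1) % 2 = 1 := by omega
    have h2 : (2*t+1) / 2 = t := by omega
    rw [this, h2]
    norm_num
  have h2 := radInv_lt_one t
  have h3 := radInv_nonneg t
  rw [psi, h1, min_eq_right (by linarith)]
  ring

lemma sum_psi_even (t : ℕ) : ∑ k ∈ Finset.range (2*t), psi k = t/2 := by
  induction t with
  | zero => simp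
  | succ t ih =>
    have : 2*(t+1) = (2*t) + 1 + 1 := by ring
    rw [this, Finset.sum_range_succ, Finset.sum_range_succ, ih, psi_even, psi_odd]
    push_cast
    ring

lemma abs_sum_psi (K : ℕ) : |∑ k ∈ Finset.range K, psi k - K/4| ≤ 1/4 := by
  rcases Nat.even_or_odd K with ⟨t, ht⟩ | ⟨t, ht⟩
  · have : K = 2*t := by omega
    rw [this, sum_psi_even]
    push_cast
    rw [abs_le]
    constructor <;> linarith
  · rw [ht, Finset.sum_range_succ, sum_psi_even, psi_even]
    have h2 := radInv_lt_one t
    have h3 := radInv_nonneg t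
    push_cast
    rw [abs_le]
    constructor <;> linarith

lemma haarFn_eq (j m : ℕ) (t : ℝ) :
    haarFn j m t =
      (Set.Ico ((m:ℝ)/2^j) ((m:ℝ)/2^j + 1/2^(j+1))).indicator (fun _ => (1:ℝ)) t
      - (Set.Ico ((m:ℝ)/2^j + 1/2^(j+1)) (((m:ℝ)+1)/2^j)).indicator (fun _ => (1:ℝ)) t := by
  unfold haarFn
  rw [Set.indicator_apply, Set.indicator_apply]
  simp only [Set.mem_Ico]
  split_ifs with h1 h2 h3 h4 <;> try norm_num
  exact absurd h2.1 (not_le.2 h1.2)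

lemma vol_Ico_inter_Ioc {a b x : ℝ} (hab : a ≤ b) (hb : b ≤ 1) :
    volume (Set.Ico a b ∩ Set.Ioc x 1) = ENNReal.ofReal (b - max a x) := by
  rcases le_or_gt a x with h | h
  · have hs : Set.Ico a b ∩ Set.Ioc x 1 = Set.Ioo x b := by
      ext t
      simp only [Set.mem_inter_iff, Set.mem_Ico, Set.mem_Ioc, Set.mem_Ioo]
      constructor
      · rintro ⟨⟨h1, h2⟩, h3, h4⟩; exact ⟨h3, h2⟩
      · rintro ⟨h1, h2⟩; exact ⟨⟨by linarith, h2⟩, h1, by linarith⟩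
    rw [hs, Real.volume_Ioo, max_eq_right h]
  · have hs : Set.Ico a b ∩ Set.Ioc x 1 = Set.Ico a b := by
      ext t
      simp only [Set.mem_inter_iff, Set.mem_Ico, Set.mem_Ioc]
      constructor
      · rintro ⟨h1, h2⟩; exact h1
      · rintro ⟨h1, h2⟩; exact ⟨⟨h1, h2⟩, by linarith, by linarith⟩
    rw [hs, Real.volume_Ico, max_eq_left h.le]

lemma integrable_ind (S : Set ℝ) (hS : MeasurableSet S) :
    Integrable (S.indicator (fun _ => (1:ℝ))) (volume.restrict (Set.Ioc (0:ℝ) 1)) := by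
  rw [MeasureTheory.integrable_indicator_iff hS]
  apply (integrableOn_const_iff (by simp)).2
  right
  rw [Measure.restrict_apply hS]
  calc volume (S ∩ Set.Ioc 0 1) ≤ volume (Set.Ioc (0:ℝ) 1) := measure_mono Set.inter_subset_right
    _ < ⊤ := by simp [Real.volume_Ioc]

lemma integral_ind_one (S : Set ℝ) (hS : MeasurableSet S) :
    ∫ t in Set.Ioc (0:ℝ) 1, S.indicator (fun _ => (1:ℝ)) t
      = (volume (S ∩ Set.Ioc 0 1)).toReal := by
  rw [MeasureTheory.integral_indicator hS, setIntegral_const, Measure.real, Measure.restrict_apply hS]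
  simp

noncomputable def Gfun (j m : ℕ) (x : ℝ) : ℝ :=
  max 0 (((m:ℝ)/2^j + 1/2^(j+1)) - max ((m:ℝ)/2^j) x)
  - max 0 ((((m:ℝ)+1)/2^j) - max ((m:ℝ)/2^j + 1/2^(j+1)) x)

lemma FnStep_eq (j m : ℕ) (x : ℝ) (hx : 0 ≤ x) (t : ℝ) :
    (Set.indicator (Set.Ico 0 t) (fun _ => (1:ℝ)) x) * haarFn j m t
    = (Set.Ioi x ∩ Set.Ico ((m:ℝ)/2^j) ((m:ℝ)/2^j + 1/2^(j+1))).indicator (fun _ => (1:ℝ)) t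
      - (Set.Ioi x ∩ Set.Ico ((m:ℝ)/2^j + 1/2^(j+1)) (((m:ℝ)+1)/2^j)).indicator (fun _ => (1:ℝ)) t := by
  rw [haarFn_eq]
  have h1 : Set.indicator (Set.Ico 0 t) (fun _ => (1:ℝ)) x
      = Set.indicator (Set.Ioi x) (fun _ => (1:ℝ)) t := by
    rw [Set.indicator_apply, Set.indicator_apply]
    simp only [Set.mem_Ico, Set.mem_Ioi]
    by_cases h : x < t
    · rw [if_pos ⟨hx, h⟩, if_pos h]
    · rw [if_neg (fun hc => h hc.2), if_neg h]
  rw [h1, mul_sub, ← Set.inter_indicator_mul, ← Set.inter_indicator_mul]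
  norm_num

lemma integral_step (j m : ℕ) (hm : m < 2^j) (x : ℝ) (hx : 0 ≤ x) :
    ∫ t in Set.Ioc (0:ℝ) 1, (Set.indicator (Set.Ico 0 t) (fun _ => (1:ℝ)) x) * haarFn j m t
      = Gfun j m x := by
  have hj : (0:ℝ) < 2^j := by positivity
  have hj1 : (0:ℝ) < 2^(j+1) := by positivity
  have hjj : (2:ℝ)^(j+1) = 2*2^j := by rw [pow_succ]; ring
  have hmr : (m:ℝ) + 1 ≤ 2^j := by exact_mod_cast Nat.succ_le_of_lt hm
  set a := (m:ℝ)/2^j with ha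
  set b := (m:ℝ)/2^j + 1/2^(j+1) with hb
  set c := ((m:ℝ)+1)/2^j with hc
  have hcb : c = b + 1/2^(j+1) := by
    rw [hb, hc, hjj]
    field_simp
    ring
  have hab : a ≤ b := le_add_of_nonneg_right (by positivity)
  have hbc : b ≤ c := by rw [hcb]; exact le_add_of_nonneg_right (by positivity)
  have hc1 : c ≤ 1 := by rw [hc, div_le_one hj]; exact hmr
  have hb1 : b ≤ 1 := le_trans hbc hc1
  rw [MeasureTheory.integral_congr_ae (Filter.Eventually.of_forall (FnStep_eq j m x hx))]
  rw [MeasureTheory.integral_sub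
    (integrable_ind _ (measurableSet_Ioi.inter measurableSet_Ico))
    (integrable_ind _ (measurableSet_Ioi.inter measurableSet_Ico))]
  rw [integral_ind_one _ (measurableSet_Ioi.inter measurableSet_Ico),
      integral_ind_one _ (measurableSet_Ioi.inter measurableSet_Ico)]
  have hset : ∀ u v : ℝ, Set.Ioi x ∩ Set.Ico u v ∩ Set.Ioc 0 1 = Set.Ico u v ∩ Set.Ioc x 1 := by
    intro u v
    ext t
    simp only [Set.mem_inter_iff, Set.mem_Ioi, Set.mem_Ico, Set.mem_Ioc]
    constructor
    · rintro ⟨⟨h1, h2, h3⟩, h4, h5⟩; exact ⟨⟨h2, h3⟩, h1, h5⟩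
    · rintro ⟨⟨h1, h2⟩, h3, h4⟩; exact ⟨⟨h3, h1, h2⟩, lt_of_le_of_lt hx h3, h4⟩
  rw [hset, hset, vol_Ico_inter_Ioc hab hb1, vol_Ico_inter_Ioc hbc hc1,
      ENNReal.toReal_ofReal', ENNReal.toReal_ofReal', Gfun]
  simp only [← ha, ← hb, ← hc]
  rw [max_comm _ (0:ℝ), max_comm _ (0:ℝ)]

lemma integral_id_ind (a b : ℝ) (h0 : 0 ≤ a) (hab : a ≤ b) (hb : b ≤ 1) :
    ∫ t in Set.Ioc (0:ℝ) 1, (Set.Ico a b).indicator (fun _ => (1:ℝ)) t * t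
      = (b^2 - a^2)/2 := by
  have h1 : ∀ t : ℝ, (Set.Ico a b).indicator (fun _ => (1:ℝ)) t * t
      = (Set.Ico a b).indicator (fun s => s) t := by
    intro t
    by_cases h : t ∈ Set.Ico a b <;> simp [h]
  rw [MeasureTheory.integral_congr_ae (Filter.Eventually.of_forall h1),
      MeasureTheory.integral_indicator measurableSet_Ico,
      Measure.restrict_restrict measurableSet_Ico]
  have h2 : (Set.Ico a b ∩ Set.Ioc 0 1 : Set ℝ) =ᵐ[volume] Set.Ioc a b := by
    rw [MeasureTheory.ae_eq_set]
    constructor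
    · apply measure_mono_null (t := {a})
      · intro t ht
        simp only [Set.mem_diff, Set.mem_inter_iff, Set.mem_Ico, Set.mem_Ioc,
          Set.mem_singleton_iff] at ht ⊢
        rcases ht with ⟨⟨⟨hta, htb⟩, ht0, ht1⟩, hn⟩
        by_contra hne
        exact hn ⟨lt_of_le_of_ne hta (Ne.symm hne), le_of_lt htb⟩
      · exact measure_singleton a
    · apply measure_mono_null (t := {b})
      · intro t ht
        simp only [Set.mem_diff, Set.mem_inter_iff, Set.mem_Ico, Set.mem_Ioc,
          Set.mem_singleton_iff] at ht ⊢
        rcases ht with ⟨⟨hta, htb⟩, hn⟩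
        by_contra hne
        exact hn ⟨⟨le_of_lt hta, lt_of_le_of_ne htb hne⟩, by linarith, htb.trans hb⟩
      · exact measure_singleton b
  rw [MeasureTheory.setIntegral_congr_set h2, ← intervalIntegral.integral_of_le hab,
      integral_id]

lemma integrable_ind_id (u v : ℝ) :
    Integrable (fun t => (Set.Ico u v).indicator (fun _ => (1:ℝ)) t * t)
      (volume.restrict (Set.Ioc (0:ℝ) 1)) := by
  have h : (fun t => (Set.Ico u v).indicator (fun _ => (1:ℝ)) t * t)
      = (Set.Ico u v).indicator (fun s => s) := by
    funext t
    by_cases h : t ∈ Set.Ico u v <;> simp [h]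
  rw [h, MeasureTheory.integrable_indicator_iff measurableSet_Ico]
  exact Integrable.restrict (Continuous.integrableOn_Ioc (μ := volume) (a := (0:ℝ)) (b := 1) continuous_id)

lemma integral_t_haar (j m : ℕ) (hm : m < 2^j) :
    ∫ t in Set.Ioc (0:ℝ) 1, t * haarFn j m t = -(1/2^(2*j+2)) := by
  have hj : (0:ℝ) < 2^j := by positivity
  have hjj : (2:ℝ)^(j+1) = 2*2^j := by rw [pow_succ]; ring
  have h2j : (2:ℝ)^(2*j+2) = (2^j)^2*4 := by
    rw [pow_add, mul_comm 2 j, pow_mul]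
    norm_num
  have hmr : (m:ℝ) + 1 ≤ 2^j := by exact_mod_cast Nat.succ_le_of_lt hm
  have hm0 : (0:ℝ) ≤ (m:ℝ) := Nat.cast_nonneg m
  have hcb : ((m:ℝ)+1)/2^j = ((m:ℝ)/2^j + 1/2^(j+1)) + 1/2^(j+1) := by
    rw [hjj]; field_simp; ring
  have h0a : (0:ℝ) ≤ (m:ℝ)/2^j := by positivity
  have hab : (m:ℝ)/2^j ≤ (m:ℝ)/2^j + 1/2^(j+1) := le_add_of_nonneg_right (by positivity)
  have hbc : (m:ℝ)/2^j + 1/2^(j+1) ≤ ((m:ℝ)+1)/2^j := by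
    rw [hcb]; exact le_add_of_nonneg_right (by positivity)
  have hc1 : ((m:ℝ)+1)/2^j ≤ 1 := by rw [div_le_one hj]; exact hmr
  have hb1 : (m:ℝ)/2^j + 1/2^(j+1) ≤ 1 := le_trans hbc hc1
  have h0b : (0:ℝ) ≤ (m:ℝ)/2^j + 1/2^(j+1) := le_trans h0a hab
  have hps : ∀ t : ℝ, t * haarFn j m t
      = (Set.Ico ((m:ℝ)/2^j) ((m:ℝ)/2^j + 1/2^(j+1))).indicator (fun _ => (1:ℝ)) t * t
        - (Set.Ico ((m:ℝ)/2^j + 1/2^(j+1)) (((m:ℝ)+1)/2^j)).indicator (fun _ => (1:ℝ)) t * t := by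
    intro t
    rw [haarFn_eq]
    ring
  rw [MeasureTheory.integral_congr_ae (Filter.Eventually.of_forall hps),
      MeasureTheory.integral_sub (integrable_ind_id _ _) (integrable_ind_id _ _),
      integral_id_ind _ _ h0a hab hb1, integral_id_ind _ _ h0b hbc hc1]
  rw [hjj, h2j]
  field_simp
  ring

lemma integrable_t_haar (j m : ℕ) :
    Integrable (fun t => t * haarFn j m t) (volume.restrict (Set.Ioc (0:ℝ) 1)) := by
  have hps : ∀ t : ℝ, t * haarFn j m t
      = (Set.Ico ((m:ℝ)/2^j) ((m:ℝ)/2^j + 1/2^(j+1))).indicator (fun _ => (1:ℝ)) t * t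
        - (Set.Ico ((m:ℝ)/2^j + 1/2^(j+1)) (((m:ℝ)+1)/2^j)).indicator (fun _ => (1:ℝ)) t * t := by
    intro t
    rw [haarFn_eq]
    ring
  exact Integrable.congr ((integrable_ind_id _ _).sub (integrable_ind_id _ _))
    (Filter.Eventually.of_forall fun t => (hps t).symm)

lemma haarCoeff_formula (N j m : ℕ) (hN : 0 < N) (hm : m < 2^j) :
    haarCoeff (fun n => 1 - radInv n) N j m
      = 1/2^(2*j+2) + (∑ n ∈ Finset.range N, Gfun j m (1 - radInv n)) / N := by
  have hx : ∀ n : ℕ, 0 ≤ 1 - radInv n := fun n => by linarith [radInv_lt_one n]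
  unfold haarCoeff
  rw [intervalIntegral.integral_of_le zero_le_one]
  have hint1 : ∀ n : ℕ, Integrable (fun t =>
      (Set.indicator (Set.Ico 0 t) (fun _ => (1:ℝ)) (1 - radInv n)) * haarFn j m t)
      (volume.restrict (Set.Ioc (0:ℝ) 1)) := by
    intro n
    exact Integrable.congr
      ((integrable_ind _ (measurableSet_Ioi.inter measurableSet_Ico)).sub
        (integrable_ind _ (measurableSet_Ioi.inter measurableSet_Ico)))
      (Filter.Eventually.of_forall fun t => (FnStep_eq j m _ (hx n) t).symm)
  have hps : ∀ t : ℝ, disc (fun n => 1 - radInv n) N t * haarFn j m t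
      = (∑ n ∈ Finset.range N,
          (Set.indicator (Set.Ico 0 t) (fun _ => (1:ℝ)) (1 - radInv n)) * haarFn j m t)/N
        - t * haarFn j m t := by
    intro t
    unfold disc
    rw [sub_mul, div_mul_eq_mul_div, Finset.sum_mul]
  rw [MeasureTheory.integral_congr_ae (Filter.Eventually.of_forall hps)]
  rw [MeasureTheory.integral_sub
    ((MeasureTheory.integrable_finset_sum _ (fun n _ => hint1 n)).div_const _)
    (integrable_t_haar j m)]
  rw [MeasureTheory.integral_div, MeasureTheory.integral_finset_sum _ (fun n _ => hint1 n)]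
  rw [Finset.sum_congr rfl (fun n _ => integral_step j m hm _ (hx n)), integral_t_haar j m hm]
  ring

lemma Gfun_eval (j m n : ℕ) (hm : m < 2^j) :
    Gfun j m (1 - radInv n)
      = if n % 2^j = nrev j (2^j - 1 - m) then -(1/2^j) * psi (n / 2^j) else 0 := by
  have hj0 : 0 < 2^j := Nat.two_pow_pos j
  have hj : (0:ℝ) < 2^j := by positivity
  have hjj : (2:ℝ)^(j+1) = 2*2^j := by rw [pow_succ]; ring
  set q := 2^j - 1 - m with hqdef
  have hq : q < 2^j := by omega
  have hqm : q + m + 1 = 2^j := by omega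
  have hqr : (q:ℝ) + m + 1 = 2^j := by exact_mod_cast hqm
  set s := n % 2^j with hs
  have hs2 : s < 2^j := Nat.mod_lt _ hj0
  set p := nrev j s with hp
  have hps : p < 2^j := nrev_lt j s
  have hrs : radInv s = (p:ℝ)/2^j := radInv_eq_nrev j s hs2
  set w := radInv (n / 2^j) with hw
  have hw0 : 0 ≤ w := radInv_nonneg _
  have hw1 : w < 1 := radInv_lt_one _
  have hxval : 1 - radInv n = ((q:ℝ) + (m:ℝ) + 1 - (p:ℝ) - w)/2^j := by
    rw [radInv_split j n, ← hs, ← hw, hrs, eq_div_iff hj.ne']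
    field_simp
    linarith [hqr]
  have hbval : (m:ℝ)/2^j + 1/2^(j+1) = ((m:ℝ) + 1/2)/2^j := by
    rw [hjj]; field_simp
  have hD : ∀ y z : ℝ, y ≤ z → y/2^j ≤ z/2^j := fun y z h =>
    (div_le_div_iff_of_pos_right hj).2 h
  by_cases hcase : s = nrev j q
  · have hpq : p = q := by rw [hp, hcase, nrev_nrev j q hq]
    rw [if_pos hcase, Gfun, hxval, hbval, hpq]
    have hxx : ((q:ℝ) + (m:ℝ) + 1 - (q:ℝ) - w)/2^j = ((m:ℝ) + 1 - w)/2^j := by ring_nf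
    rw [hxx]
    have h1 : max ((m:ℝ)/2^j) (((m:ℝ) + 1 - w)/2^j) = ((m:ℝ) + 1 - w)/2^j :=
      max_eq_right (hD _ _ (by linarith))
    rw [h1, div_sub_div_same]
    have hpsi : psi (n / 2^j) = min w (1 - w) := by rw [psi, ← hw]
    rcases le_total w (1/2) with hw2 | hw2
    · rw [max_eq_left (div_nonpos_of_nonpos_of_nonneg (by linarith) hj.le)]
      rw [max_eq_right (hD ((m:ℝ) + 1/2) ((m:ℝ) + 1 - w) (by linarith)),
        div_sub_div_same, max_eq_right (div_nonneg (by linarith) hj.le),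
        hpsi, min_eq_left (by linarith)]
      ring
    · rw [max_eq_right (div_nonneg (by linarith) hj.le),
        max_eq_left (hD ((m:ℝ) + 1 - w) ((m:ℝ) + 1/2) (by linarith)),
        div_sub_div_same, max_eq_right (div_nonneg (by linarith) hj.le),
        hpsi, min_eq_right (by linarith)]
      ring
  · rw [if_neg hcase, Gfun, hxval, hbval]
    have hpnq : p ≠ q := by
      intro hpq
      apply hcase
      rw [← nrev_nrev j s hs2, ← hp, hpq]
    rcases lt_or_gt_of_ne hpnq with hlt | hgt
    · have hc1 : (p:ℝ) + 1 ≤ (q:ℝ) := by exact_mod_cast hlt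
      rw [max_eq_right (hD ((m:ℝ)) ((q:ℝ) + (m:ℝ) + 1 - (p:ℝ) - w) (by linarith)),
        max_eq_right (hD ((m:ℝ) + 1/2) ((q:ℝ) + (m:ℝ) + 1 - (p:ℝ) - w) (by linarith)),
        div_sub_div_same, div_sub_div_same,
        max_eq_left (div_nonpos_of_nonpos_of_nonneg (by linarith) hj.le),
        max_eq_left (div_nonpos_of_nonpos_of_nonneg (by linarith) hj.le)]
      ring
    · have hc1 : (q:ℝ) + 1 ≤ (p:ℝ) := by exact_mod_cast hgt
      rw [max_eq_left (hD ((q:ℝ) + (m:ℝ) + 1 - (p:ℝ) - w) ((m:ℝ)) (by linarith)),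
        max_eq_left (hD ((q:ℝ) + (m:ℝ) + 1 - (p:ℝ) - w) ((m:ℝ) + 1/2) (by linarith)),
        div_sub_div_same, div_sub_div_same,
        max_eq_right (div_nonneg (by linarith) hj.le),
        max_eq_right (div_nonneg (by linarith) hj.le)]
      ring


lemma sum_G (N j m : ℕ) (hm : m < 2^j) :
    ∑ n ∈ Finset.range N, Gfun j m (1 - radInv n)
      = -(1/2^j) * ∑ n ∈ (Finset.range N).filter (fun n => n % 2^j = nrev j (2^j-1-m)),
          psi (n/2^j) := by
  rw [Finset.sum_filter, Finset.mul_sum]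
  apply Finset.sum_congr rfl
  intro n _
  rw [Gfun_eval j m n hm]
  split <;> simp

lemma psi_zero : psi 0 = 0 := by
  have : radInv 0 = 0 := by simp [radInv]
  rw [psi, this]
  norm_num

lemma lt_ceil_iff (N j r : ℕ) (hr : r < 2^j) (k : ℕ) :
    k < (N - r + (2^j - 1)) / 2^j ↔ 2^j * k + r < N := by
  have hp0 : 0 < 2^j := Nat.two_pow_pos j
  constructor
  · intro h
    have h2 : k + 1 ≤ (N - r + (2^j - 1)) / 2^j := h
    have h3 := (Nat.le_div_iff_mul_le hp0).1 h2
    have h4 : (k+1) * 2^j = 2^j * k + 2^j := by ring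
    omega
  · intro h
    have h4 : (k+1) * 2^j = 2^j * k + 2^j := by ring
    have h3 : (k+1) * 2^j ≤ N - r + (2^j - 1) := by omega
    exact (Nat.le_div_iff_mul_le hp0).2 h3

lemma sum_psi_reindex (N j r : ℕ) (hr : r < 2^j) :
    ∑ n ∈ (Finset.range N).filter (fun n => n % 2^j = r), psi (n/2^j)
      = ∑ k ∈ Finset.range ((N - r + (2^j - 1)) / 2^j), psi k := by
  have hp0 : 0 < 2^j := Nat.two_pow_pos j
  set K := (N - r + (2^j - 1)) / 2^j with hK
  have key : ∀ k, k < K ↔ 2^j * k + r < N := lt_ceil_iff N j r hr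
  apply Finset.sum_nbij' (fun n => n / 2^j) (fun k => 2^j * k + r)
  · intro a ha
    simp only [Finset.mem_filter, Finset.mem_range] at ha ⊢
    rw [key]
    have := Nat.div_add_mod a (2^j)
    omega
  · intro a ha
    simp only [Finset.mem_filter, Finset.mem_range] at ha ⊢
    exact ⟨(key a).1 ha, by rw [Nat.mul_add_mod, Nat.mod_eq_of_lt hr]⟩
  · intro a ha
    simp only [Finset.mem_filter, Finset.mem_range] at ha
    have := Nat.div_add_mod a (2^j)
    omega
  · intro a ha
    rw [Nat.mul_add_div hp0, Nat.div_eq_of_lt hr]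
    omega
  · intro a ha
    rfl

lemma psi_nonneg (k : ℕ) : 0 ≤ psi k := by
  have h1 := radInv_nonneg k
  have h2 := radInv_lt_one k
  rw [psi]
  exact le_min h1 (by linarith)

theorem haarCoeff_reflected_vdc (N j m : ℕ) (hN : 0 < N) (hm : m < 2^j) :
    (j < Nat.clog 2 N →
      |haarCoeff (fun n => 1 - radInv n) N j m| ≤ (1/2^j) / N) ∧
    (Nat.clog 2 N ≤ j →
      |haarCoeff (fun n => 1 - radInv n) N j m| = 1/2^(2*j+2)) := by
  have hp0 : 0 < 2^j := Nat.two_pow_pos j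
  have hj : (0:ℝ) < 2^j := by positivity
  have hNR : (0:ℝ) < N := by exact_mod_cast hN
  rw [haarCoeff_formula N j m hN hm, sum_G N j m hm]
  set r := nrev j (2^j - 1 - m) with hrdef
  have hrlt : r < 2^j := nrev_lt _ _
  constructor
  · intro hcase
    have hNj : 2^j < N := (Nat.lt_clog_iff_pow_lt (by norm_num)).1 hcase
    rw [sum_psi_reindex N j r hrlt]
    set K := (N - r + (2^j - 1)) / 2^j with hK
    set T := ∑ k ∈ Finset.range K, psi k with hT
    clear_value T
    clear_value K
    have key : ∀ k, k < K ↔ 2^j * k + r < N := by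
      rw [hK]
      exact lt_ceil_iff N j r hrlt
    have hK1 : 0 < K := (key 0).2 (by omega)
    have hK2 : N ≤ 2^j * K + r := by
      by_contra h
      push_neg at h
      exact lt_irrefl K ((key K).2 h)
    obtain ⟨K', rfl⟩ : ∃ K', K = K' + 1 := ⟨K - 1, by omega⟩
    have hK3 : 2^j * K' + r < N := (key K').1 (by omega)
    have hTK := abs_sum_psi (K' + 1)
    rw [← hT, abs_le] at hTK
    obtain ⟨hT1, hT2⟩ := hTK
    have hcast1 : (N:ℝ) ≤ 2^j * (K' + 1) + r := by exact_mod_cast hK2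
    have hcast2 : 2^j * ((K':ℝ) + 1) + r < (N:ℝ) + 2^j := by
      have : ((2^j * K' + r : ℕ) : ℝ) < N := by exact_mod_cast hK3
      push_cast at this
      linarith
    have hrR : (r:ℝ) < 2^j := by exact_mod_cast hrlt
    have hr0 : (0:ℝ) ≤ r := Nat.cast_nonneg r
    have hp2 : (2:ℝ)^(j+2) = 4*2^j := by rw [pow_add]; ring
    have h2j2 : (2:ℝ)^(2*j+2) = 2^j * 2^(j+2) := by
      rw [← pow_add]
      congr 1
      omega
    have A1 : 2^j*(T - ((K':ℝ)+1)/4) ≤ 2^j*(1/4) := by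
      apply mul_le_mul_of_nonneg_left _ hj.le
      push_cast at hT2 ⊢
      linarith
    have A2 : 2^j*(-(1/4) : ℝ) ≤ 2^j*(T - ((K':ℝ)+1)/4) := by
      apply mul_le_mul_of_nonneg_left _ hj.le
      push_cast at hT1 ⊢
      linarith
    have hkey2 : |(N:ℝ) - 2^(j+2)*T| ≤ 2^(j+2) := by
      rw [abs_le, hp2]
      constructor
      · nlinarith [A1, A2, hcast1, hcast2]
      · nlinarith [A1, A2, hcast1, hcast2]
    have heq : 1/2^(2*j+2) + (-(1/2^j)*T)/(N:ℝ) = ((N:ℝ) - 2^(j+2)*T)/(2^(2*j+2)*N) := by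
      rw [h2j2, hp2]
      field_simp
      ring
    have heq2 : ((1:ℝ)/2^j)/(N:ℝ) = 2^(j+2)/(2^(2*j+2)*(N:ℝ)) := by
      rw [h2j2, hp2]
      field_simp
    rw [heq, heq2, abs_div, abs_of_pos (show (0:ℝ) < 2^(2*j+2)*N by positivity)]
    exact (div_le_div_iff_of_pos_right (by positivity)).2 hkey2
  · intro hcase
    have hNj : N ≤ 2^j := (Nat.clog_le_iff_le_pow (by norm_num)).1 hcase
    have hsum0 : ∑ n ∈ (Finset.range N).filter (fun n => n % 2^j = r), psi (n/2^j) = 0 := by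
      apply Finset.sum_eq_zero
      intro n hn
      rw [Finset.mem_filter, Finset.mem_range] at hn
      rw [Nat.div_eq_of_lt (lt_of_lt_of_le hn.1 hNj)]
      exact psi_zero
    rw [hsum0]
    simp only [mul_zero, zero_div, add_zero]
    exact abs_of_pos (by positivity)
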